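/- arXiv:2504.13342 — 2 statements merged into one kernel-verified Lean document; each statement's English description precedes it below -/
import Mathlib

section
/- The explicit code in Theorem 'ell(q-1) list' is e-error-correcting: the (q-1)ℓ + 1 words c_1, ..., c_{(q-1)ℓ+1} defined by vsupp(c_i) = {(h+1, p)} ∪ {(j,1) : j ∈ [(i-1)e+ℓ+1, ie+ℓ]} for i = h(q-1)+p (h ∈ [0,ℓ-1], p ∈ [1,q-1]) and vsupp(c_{(q-1)ℓ+1}) = {(j,1) : j ∈ [e(q-1)ℓ+ℓ+1, e(q-1)ℓ+t]}, with n ≥ e(q-1)ℓ + t and t = e + ℓ, have pairwise Hamming distance at least 2e+1. -/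
open Finset

open Fin.NatCast in
/-- The codewords of Theorem "ell(q-1) list" (paper indexing `i ∈ [1,(q-1)ℓ+1]`, coordinates
1-indexed in the paper, 0-indexed here). For `i = h(q-1)+p ≤ (q-1)ℓ` (with `h ∈ [0,ℓ-1]`,
`p ∈ [1,q-1]`), `vsupp(c_i) = {(h+1,p)} ∪ {(j,1) : j ∈ [(i-1)e+ℓ+1, ie+ℓ]}`; for
`i = (q-1)ℓ+1`, `vsupp(c_i) = {(j,1) : j ∈ [e(q-1)ℓ+ℓ+1, e(q-1)ℓ+e+ℓ]}`. -/
def cwB (q e ℓ n : ℕ) [NeZero q] (i : ℕ) : Fin n → Fin q := fun j =>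
  if i ≤ (q - 1) * ℓ then
    if j.val = (i - 1) / (q - 1) then (((i - 1) % (q - 1) + 1 : ℕ) : Fin q)
    else if (i - 1) * e + ℓ ≤ j.val ∧ j.val < i * e + ℓ then 1 else 0
  else
    if e * (q - 1) * ℓ + ℓ ≤ j.val ∧ j.val < e * (q - 1) * ℓ + e + ℓ then 1 else 0

lemma markerA_lt {q ℓ : ℕ} (hq : 3 ≤ q) (hl : 1 ≤ ℓ) (i : ℕ) (hi : 1 ≤ i)
    (hiL : i ≤ (q-1)*ℓ) : (i-1)/(q-1) < ℓ := by
  rw [Nat.div_lt_iff_lt_mul (by omega : 0 < q - 1)]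
  have h1 : 1 ≤ (q-1)*ℓ := Nat.one_le_iff_ne_zero.mpr (Nat.mul_ne_zero (by omega) (by omega))
  rw [Nat.mul_comm]; omega

lemma cwB_eq_one (q e ℓ n : ℕ) [NeZero q] (hq : 3 ≤ q) (hl : 1 ≤ ℓ) (i : ℕ)
    (hi : 1 ≤ i) (hiL : i ≤ (q-1)*ℓ + 1) (j : Fin n)
    (hj1 : (i-1)*e + ℓ ≤ j.val) (hj2 : j.val < i*e + ℓ) :
    cwB q e ℓ n i j = 1 := by
  unfold cwB
  rcases le_or_gt i ((q-1)*ℓ) with h | h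
  · have hm : (i-1)/(q-1) < ℓ := markerA_lt hq hl i hi h
    rw [if_pos h, if_neg (by omega), if_pos ⟨hj1, hj2⟩]
  · have hi' : i = (q-1)*ℓ + 1 := by omega
    subst hi'
    have key1 : ((q-1)*ℓ+1-1)*e = e*(q-1)*ℓ := by rw [Nat.add_sub_cancel]; ring
    have key2 : ((q-1)*ℓ+1)*e = e*(q-1)*ℓ + e := by ring
    rw [key1] at hj1
    rw [key2] at hj2
    rw [if_neg (by omega), if_pos ⟨hj1, by omega⟩]

lemma cwB_eq_zero (q e ℓ n : ℕ) [NeZero q] (hq : 3 ≤ q) (hl : 1 ≤ ℓ) (i : ℕ)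
    (hi : 1 ≤ i) (hiL : i ≤ (q-1)*ℓ + 1) (j : Fin n) (hj : ℓ ≤ j.val)
    (hout : ¬((i-1)*e + ℓ ≤ j.val ∧ j.val < i*e + ℓ)) :
    cwB q e ℓ n i j = 0 := by
  unfold cwB
  rcases le_or_gt i ((q-1)*ℓ) with h | h
  · have hm : (i-1)/(q-1) < ℓ := markerA_lt hq hl i hi h
    rw [if_pos h, if_neg (by omega), if_neg hout]
  · have hi' : i = (q-1)*ℓ + 1 := by omega
    subst hi'
    have key1 : ((q-1)*ℓ+1-1)*e = e*(q-1)*ℓ := by rw [Nat.add_sub_cancel]; ring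
    have key2 : ((q-1)*ℓ+1)*e = e*(q-1)*ℓ + e := by ring
    rw [key1, key2] at hout
    rw [if_neg (by omega), if_neg (by omega)]

lemma cwB_marker_val (q e ℓ n : ℕ) [NeZero q] (hq : 3 ≤ q) (i : ℕ) (hiL : i ≤ (q-1)*ℓ)
    (j : Fin n) (hj : j.val = (i-1)/(q-1)) :
    (cwB q e ℓ n i j).val = (i-1) % (q-1) + 1 := by
  unfold cwB
  rw [if_pos hiL, if_pos hj]
  have hlt : (i-1) % (q-1) + 1 < q := by
    have := Nat.mod_lt (i-1) (show 0 < q-1 by omega)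
    omega
  rw [Fin.val_natCast, Nat.mod_eq_of_lt hlt]

open Fin.NatCast in
lemma key_lemma (q n e ℓ : ℕ) [NeZero q] (hq : 3 ≤ q) (hl : 1 ≤ ℓ)
    (hn : e * (q - 1) * ℓ + (e + ℓ) ≤ n)
    (i1 i2 : ℕ) (hi1 : 1 ≤ i1) (hi2 : i2 ≤ (q - 1) * ℓ + 1) (hlt : i1 < i2) :
    2 * e + 1 ≤ hammingDist (cwB q e ℓ n i1) (cwB q e ℓ n i2) := by
  have hone : (1 : Fin q) ≠ 0 := by
    have : ((1:ℕ) : Fin q).val = 1 := by rw [Fin.val_natCast, Nat.mod_eq_of_lt (by omega)]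
    intro h
    rw [Nat.cast_one] at this
    rw [h] at this
    simp at this
  have hi1L : i1 ≤ (q-1)*ℓ := by omega
  have hi2' : 1 ≤ i2 := by omega
  set m := (i1 - 1) / (q - 1) with hm
  have hmℓ : m < ℓ := markerA_lt hq hl i1 hi1 hi1L
  -- arithmetic facts
  have hE1 : i1*e = (i1-1)*e + e := by
    obtain ⟨k, rfl⟩ : ∃ k, i1 = k+1 := ⟨i1-1, by omega⟩
    simp [Nat.add_mul]
  have hE2 : i2*e = (i2-1)*e + e := by
    obtain ⟨k, rfl⟩ : ∃ k, i2 = k+1 := ⟨i2-1, by omega⟩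
    simp [Nat.add_mul]
  have h12 : i1*e ≤ (i2-1)*e := Nat.mul_le_mul_right e (by omega)
  have hb2n : i2*e + ℓ ≤ n := by
    calc i2 * e + ℓ ≤ ((q-1)*ℓ+1) * e + ℓ :=
          Nat.add_le_add_right (Nat.mul_le_mul_right e hi2) ℓ
      _ = e*(q-1)*ℓ + (e + ℓ) := by ring
      _ ≤ n := hn
  have hℓn : ℓ ≤ n := by omega
  -- the distinguishing set
  set T : Finset ℕ := insert m (Finset.Ico ((i1-1)*e + ℓ) (i1*e + ℓ) ∪
      Finset.Ico ((i2-1)*e + ℓ) (i2*e + ℓ)) with hT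
  have hTcard : T.card = 2*e + 1 := by
    rw [hT, Finset.card_insert_of_notMem (by
      simp only [Finset.mem_union, Finset.mem_Ico]
      omega)]
    rw [Finset.card_union_of_disjoint (by
      rw [Finset.disjoint_left]
      intro x hx1 hx2
      simp only [Finset.mem_Ico] at hx1 hx2
      omega)]
    rw [Nat.card_Ico, Nat.card_Ico]
    omega
  -- every element of T is < n and is a differing coordinate
  have hTlt : ∀ k ∈ T, k < n := by
    intro k hk
    rw [hT] at hk
    simp only [Finset.mem_insert, Finset.mem_union, Finset.mem_Ico] at hk
    omega
  have hdiff : ∀ k (hkT : k ∈ T) (hkn : k < n),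
      cwB q e ℓ n i1 ⟨k, hkn⟩ ≠ cwB q e ℓ n i2 ⟨k, hkn⟩ := by
    intro k hkT hkn
    rw [hT] at hkT
    simp only [Finset.mem_insert, Finset.mem_union, Finset.mem_Ico] at hkT
    rcases hkT with hk | hk | hk
    · -- marker coordinate
      subst hk
      have hv1 : (cwB q e ℓ n i1 ⟨m, hkn⟩).val = (i1-1) % (q-1) + 1 :=
        cwB_marker_val q e ℓ n hq i1 hi1L ⟨m, hkn⟩ rfl
      rcases le_or_gt i2 ((q-1)*ℓ) with h2 | h2
      · rcases eq_or_ne m ((i2-1)/(q-1)) with hmm | hmm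
        · have hv2 : (cwB q e ℓ n i2 ⟨m, hkn⟩).val = (i2-1) % (q-1) + 1 :=
            cwB_marker_val q e ℓ n hq i2 h2 ⟨m, hkn⟩ hmm
          intro h
          rw [h, hv2] at hv1
          -- i1-1 and i2-1 have same div and same mod ⇒ equal
          have d1 := Nat.div_add_mod (i1-1) (q-1)
          have d2 := Nat.div_add_mod (i2-1) (q-1)
          rw [hm] at hmm
          have : (q-1) * ((i1-1)/(q-1)) = (q-1) * ((i2-1)/(q-1)) := by rw [hmm]
          omega
        · -- i2's word is zero at m
          have hv2 : cwB q e ℓ n i2 ⟨m, hkn⟩ = 0 := by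
            unfold cwB
            rw [if_pos h2, if_neg hmm, if_neg (by simp only [Fin.val_mk]; omega)]
          intro h
          rw [h, hv2] at hv1
          simp at hv1
      · have hv2 : cwB q e ℓ n i2 ⟨m, hkn⟩ = 0 := by
          unfold cwB
          rw [if_neg (by omega), if_neg (by simp only [Fin.val_mk]; omega)]
        intro h
        rw [h, hv2] at hv1
        simp at hv1
    · -- block of i1
      have hv1 : cwB q e ℓ n i1 ⟨k, hkn⟩ = 1 :=
        cwB_eq_one q e ℓ n hq hl i1 hi1 (by omega) _ hk.1 hk.2
      have hv2 : cwB q e ℓ n i2 ⟨k, hkn⟩ = 0 :=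
        cwB_eq_zero q e ℓ n hq hl i2 hi2' hi2 _ (by simp only [Fin.val_mk]; omega) (by simp only [Fin.val_mk]; omega)
      rw [hv1, hv2]; exact hone
    · have hv1 : cwB q e ℓ n i1 ⟨k, hkn⟩ = 0 :=
        cwB_eq_zero q e ℓ n hq hl i1 hi1 (by omega) _ (by simp only [Fin.val_mk]; omega) (by simp only [Fin.val_mk]; omega)
      have hv2 : cwB q e ℓ n i2 ⟨k, hkn⟩ = 1 :=
        cwB_eq_one q e ℓ n hq hl i2 hi2' hi2 _ hk.1 hk.2
      rw [hv1, hv2]; exact hone.symm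
  -- conclude
  have hsub : T ⊆ (Finset.univ.filter
      fun j => cwB q e ℓ n i1 j ≠ cwB q e ℓ n i2 j).image Fin.val := by
    intro k hk
    have hkn := hTlt k hk
    exact Finset.mem_image.mpr ⟨⟨k, hkn⟩, Finset.mem_filter.mpr
      ⟨Finset.mem_univ _, hdiff k hk hkn⟩, rfl⟩
  calc 2*e+1 = T.card := hTcard.symm
    _ ≤ _ := Finset.card_le_card hsub
    _ ≤ _ := Finset.card_image_le
    _ = hammingDist (cwB q e ℓ n i1) (cwB q e ℓ n i2) := rfl

/-- The explicit code of Theorem "ell(q-1) list" is `e`-error-correcting: its `(q-1)ℓ+1`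
codewords have pairwise Hamming distance at least `2e+1`. -/
theorem stmt15 (q n e ℓ t : ℕ) [NeZero q] (hq : 3 ≤ q) (hl : 1 ≤ ℓ) (ht : t = e + ℓ)
    (hn : e * (q - 1) * ℓ + t ≤ n) :
    ∀ i1, 1 ≤ i1 → i1 ≤ (q - 1) * ℓ + 1 → ∀ i2, 1 ≤ i2 → i2 ≤ (q - 1) * ℓ + 1 → i1 ≠ i2 →
      2 * e + 1 ≤ hammingDist (cwB q e ℓ n i1) (cwB q e ℓ n i2) := by
  subst ht
  intro i1 h11 h12 i2 h21 h22 hne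
  rcases Nat.lt_or_ge i1 i2 with h | h
  · exact key_lemma q n e ℓ hq hl hn i1 i2 h11 h22 h
  · have h' : i2 < i1 := by omega
    rw [hammingDist_comm]
    exact key_lemma q n e ℓ hq hl hn i2 i1 h21 h12 h'
end

section
/- Asymptotic comparison used in Lemma 'LemAlg?': for fixed e ≥ 1, ℓ ≥ 1, q ≥ 3 and sufficiently large n, C(n-2e-1, ℓ-1)·(q-1)^{ℓ-1}·C(2e+1, e)·((e+1)(q-2) + 2) ≥ (e+2)·V_q(n-e-1, ℓ-1), where V_q(m,r) = Σ_{i=0}^{r} (q-1)^i C(m,i). -/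
open Finset

private lemma stmt17_sum_bound (a m k : ℕ) (ha : 2 ≤ a) (h : 2 * k ≤ m) :
    ∑ i ∈ Finset.range (k+1), a ^ i * m.choose i ≤ 2 * a ^ k * m.choose k := by
  induction k with
  | zero => simp
  | succ k ih =>
    rw [Finset.sum_range_succ]
    have h1 : 2 * k ≤ m := by omega
    have h2 : m.choose k ≤ m.choose (k+1) := by
      apply Nat.choose_le_succ_of_lt_half_left; omega
    have := ih h1
    have hstep : 2 * a ^ k * m.choose k ≤ a ^ (k+1) * m.choose (k+1) := by
      calc 2 * a ^ k * m.choose k ≤ a * a ^ k * m.choose (k+1) := by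
            exact Nat.mul_le_mul (Nat.mul_le_mul_right _ ha) h2
        _ = a ^ (k+1) * m.choose (k+1) := by ring
    calc ∑ i ∈ Finset.range (k+1), a ^ i * m.choose i + a^(k+1) * m.choose (k+1)
        ≤ 2 * a ^ k * m.choose k + a^(k+1)*m.choose (k+1) := by omega
      _ ≤ a^(k+1)*m.choose (k+1) + a^(k+1)*m.choose (k+1) := by omega
      _ = 2 * a^(k+1) * m.choose (k+1) := by ring

private lemma stmt17_step (m k : ℕ) (h : 2 * k ≤ m) :
    (m+1).choose k ≤ 2 * m.choose k := by
  cases k with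
  | zero => simp
  | succ k =>
    rw [Nat.choose_succ_succ]
    simp only [Nat.succ_eq_add_one]
    have : m.choose k ≤ m.choose (k+1) := by
      apply Nat.choose_le_succ_of_lt_half_left; omega
    omega

private lemma stmt17_shift (m k e : ℕ) (h : 2 * k ≤ m) :
    (m + e).choose k ≤ 2 ^ e * m.choose k := by
  induction e with
  | zero => simp
  | succ e ih =>
    have h1 : 2 * k ≤ m + e := by omega
    calc (m + (e+1)).choose k = ((m + e) + 1).choose k := by ring_nf
      _ ≤ 2 * (m + e).choose k := stmt17_step _ _ h1
      _ ≤ 2 * (2 ^ e * m.choose k) := by exact Nat.mul_le_mul_left _ ih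
      _ = 2 ^ (e+1) * m.choose k := by ring

private lemma stmt17_double (e : ℕ) : (2*e+2).choose (e+1) = 2 * (2*e+1).choose e := by
  have h1 : (2*e+2).choose (e+1) = (2*e+1).choose e + (2*e+1).choose (e+1) := by
    have := Nat.choose_succ_succ (2*e+1) e
    convert this using 2 <;> omega
  have h2 : (2*e+1).choose (e+1) = (2*e+1).choose e := by
    have := Nat.choose_symm (n := 2*e+1) (k := e) (by omega)
    have he : 2*e+1-e = e+1 := by omega
    rw [he] at this
    omega
  omega

private lemma stmt17_pow_le (e : ℕ) (he : 2 ≤ e) : 2 ^ (e+1) ≤ (2*e+1).choose e := by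
  induction e with
  | zero => omega
  | succ e ih =>
    rcases Nat.lt_or_ge e 2 with h | h
    · interval_cases e
      · omega
      · decide
    · have ihe := ih h
      have hmono : (2*e+2).choose (e+1) ≤ (2*(e+1)+1).choose (e+1) :=
        Nat.choose_le_choose _ (by omega)
      have hd := stmt17_double e
      omega

private lemma stmt17_const (e : ℕ) (he : 1 ≤ e) :
    2 * (e+2) * 2 ^ e ≤ (2*e+1).choose e * (e+3) := by
  rcases Nat.lt_or_ge e 2 with h | h
  · interval_cases e
    decide
  · have h1 : 2 ^ (e+1) ≤ (2*e+1).choose e := stmt17_pow_le e h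
    calc 2 * (e+2) * 2 ^ e = 2 ^ (e+1) * (e+2) := by ring
      _ ≤ (2*e+1).choose e * (e+3) := Nat.mul_le_mul h1 (by omega)

/-- Asymptotic comparison of Lemma "LemAlg?": for fixed `e ≥ 1`, `ℓ ≥ 1`, `q ≥ 3` and all
sufficiently large `n`,
`C(n-2e-1,ℓ-1)·(q-1)^{ℓ-1}·C(2e+1,e)·((e+1)(q-2)+2) ≥ (e+2)·V_q(n-e-1,ℓ-1)`. -/
theorem stmt17 (e ℓ q : ℕ) (he : 1 ≤ e) (hl : 1 ≤ ℓ) (hq : 3 ≤ q) :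
    ∃ n0 : ℕ, ∀ n ≥ n0,
      (e + 2) * ∑ i ∈ Finset.range ℓ, (q - 1) ^ i * (n - e - 1).choose i
        ≤ (n - 2 * e - 1).choose (ℓ - 1) * (q - 1) ^ (ℓ - 1) * (2 * e + 1).choose e *
            ((e + 1) * (q - 2) + 2) := by
  obtain ⟨k, rfl⟩ : ∃ k, ℓ = k + 1 := ⟨ℓ - 1, by omega⟩
  refine ⟨2 * e + 2 * k + 2, fun n hn => ?_⟩
  set a := q - 1 with ha_def
  have ha : 2 ≤ a := by omega
  set m' := n - 2 * e - 1 with hm'_def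
  have hm : n - e - 1 = m' + e := by omega
  have hk' : 2 * k ≤ m' := by omega
  have hk : 2 * k ≤ m' + e := by omega
  simp only [Nat.add_sub_cancel, hm]
  have h1 : (e + 2) * ∑ i ∈ Finset.range (k+1), a ^ i * (m' + e).choose i
      ≤ (e + 2) * (2 * a ^ k * (m' + e).choose k) :=
    Nat.mul_le_mul_left _ (stmt17_sum_bound a (m' + e) k ha hk)
  have h2 : (m' + e).choose k ≤ 2 ^ e * m'.choose k := stmt17_shift m' k e hk'
  have h3 : (e + 2) * (2 * a ^ k * (m' + e).choose k)
      ≤ (2 * (e + 2) * 2 ^ e) * (a ^ k * m'.choose k) := by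
    calc (e + 2) * (2 * a ^ k * (m' + e).choose k)
        ≤ (e + 2) * (2 * a ^ k * (2 ^ e * m'.choose k)) := by
          exact Nat.mul_le_mul_left _ (Nat.mul_le_mul_left _ h2)
      _ = (2 * (e + 2) * 2 ^ e) * (a ^ k * m'.choose k) := by ring
  have h4 : (2 * (e + 2) * 2 ^ e) * (a ^ k * m'.choose k)
      ≤ ((2*e+1).choose e * (e + 3)) * (a ^ k * m'.choose k) :=
    Nat.mul_le_mul_right _ (stmt17_const e he)
  have h5 : e + 3 ≤ (e + 1) * (q - 2) + 2 := by
    have : 1 ≤ q - 2 := by omega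
    nlinarith
  have h6 : ((2*e+1).choose e * (e + 3)) * (a ^ k * m'.choose k)
      ≤ m'.choose k * a ^ k * (2 * e + 1).choose e * ((e + 1) * (q - 2) + 2) := by
    calc ((2*e+1).choose e * (e + 3)) * (a ^ k * m'.choose k)
        = m'.choose k * a ^ k * (2 * e + 1).choose e * (e + 3) := by ring
      _ ≤ m'.choose k * a ^ k * (2 * e + 1).choose e * ((e + 1) * (q - 2) + 2) :=
          Nat.mul_le_mul_left _ h5
  omega
end
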